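/- The exhaustive reduction procedure applied to a cycle c — repeatedly, while some coefficient c_i is nonzero with σ_i a gradient facet paired as (σ_i, σ_j) ∈ V, replacing c by c − (c_i/D_{i,j})·D_j — terminates and computes the stabilized flow Φ^∞(c): the unique Φ-invariant cycle that is V-homologous to c. -/

import Mathlib

open Classical Finset

noncomputable section

variable {𝕜 : Type} [Field 𝕜] {l : ℕ}

/-- The support of a coordinate vector: the set of basis indices with nonzero coefficient. -/
def vsupp (c : Fin l → 𝕜) : Finset (Fin l) :=
  Finset.univ.filter (fun i => c i ≠ 0)

/-- The pivot of a coordinate vector: the maximal index of its support (`⊥` if zero). -/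
def vpivot (c : Fin l → 𝕜) : WithBot (Fin l) := (vsupp c).max

/-- The lexicographic order on finite subsets of a totally ordered set. -/
def finsetLexLe {α : Type*} [LinearOrder α] (A B : Finset α) : Prop :=
  A = B ∨ ∃ h : ((A \ B) ∪ (B \ A)).Nonempty, ((A \ B) ∪ (B \ A)).max' h ∈ B

/-- The lexicographic preorder on chains, comparing supports lexicographically. -/
def chainLexLe (c₁ c₂ : Fin l → 𝕜) : Prop := finsetLexLe (vsupp c₁) (vsupp c₂)

/-- The strict lexicographic preorder on chains. -/
def chainLexLt (c₁ c₂ : Fin l → 𝕜) : Prop :=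
  chainLexLe c₁ c₂ ∧ vsupp c₁ ≠ vsupp c₂

/-- A basis element is critical if it is contained in no pair of `V`. -/
def CriticalIn {l : ℕ} (V : Finset (Fin l × Fin l)) (a : Fin l) : Prop :=
  ∀ p ∈ V, p.1 ≠ a ∧ p.2 ≠ a

/-- A based chain complex with an elementwise filtration: the basis elements are
`σ_1 < … < σ_l` (indexed by `Fin l`), `deg` records their homological degree, and `D` is the
filtration boundary matrix (the column `D _ j` represents `∂σ_j`).  Monotonicity `filt`
expresses that the down sets of the filtration order span subcomplexes, `homog` that the
boundary map decreases degree by one, and `dd` that `∂ ∘ ∂ = 0`. -/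
structure BasedChainComplex (𝕜 : Type) [Field 𝕜] (l : ℕ) where
  deg : Fin l → ℕ
  D : Matrix (Fin l) (Fin l) 𝕜
  homog : ∀ i j, D i j ≠ 0 → deg i + 1 = deg j
  filt : ∀ i j, D i j ≠ 0 → i < j
  dd : D * D = 0

namespace BasedChainComplex

variable (C : BasedChainComplex 𝕜 l)

/-- `σ_i` is a facet of `σ_j` if `⟨∂σ_j, σ_i⟩ ≠ 0`. -/
def IsFacet (i j : Fin l) : Prop := C.D i j ≠ 0

/-- An algebraic gradient: a disjoint collection `V` of facet pairs arising from an
algebraic Morse function, i.e. a monotonic function `f` on the basis such that a facet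
pair `(μ, η)` satisfies `f μ = f η` iff `(μ, η) ∈ V`. -/
def IsAlgGradient (V : Finset (Fin l × Fin l)) : Prop :=
  (∀ p ∈ V, C.IsFacet p.1 p.2) ∧
  (∀ p ∈ V, ∀ q ∈ V, p ≠ q → p.1 ≠ q.1 ∧ p.1 ≠ q.2 ∧ p.2 ≠ q.1 ∧ p.2 ≠ q.2) ∧
  (∃ f : Fin l → ℝ, (∀ i j, C.IsFacet i j → f i ≤ f j) ∧
    (∀ i j, C.IsFacet i j → (f i = f j ↔ (i, j) ∈ V)))

/-- The chain homotopy `F` of an algebraic gradient `V`: the linear map with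
`F σ = −⟨∂τ, σ⟩⁻¹ · τ` if `(σ, τ) ∈ V` and `F σ = 0` otherwise. -/
def Fmap (V : Finset (Fin l × Fin l)) (c : Fin l → 𝕜) : Fin l → 𝕜 :=
  fun j => ∑ i, (if (i, j) ∈ V then -(C.D i j)⁻¹ else 0) * c i

/-- The flow of an algebraic gradient `V`: `Φ(c) = c + ∂F(c) + F(∂c)`. -/
def flow (V : Finset (Fin l × Fin l)) (c : Fin l → 𝕜) : Fin l → 𝕜 :=
  c + C.D.mulVec (C.Fmap V c) + C.Fmap V (C.D.mulVec c)

/-- A cycle of degree `n`: a chain with `∂z = 0` supported in degree `n`. -/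
def IsCycle (n : ℕ) (z : Fin l → 𝕜) : Prop :=
  C.D.mulVec z = 0 ∧ ∀ i, z i ≠ 0 → C.deg i = n

/-- `V` is `n`-reduced: for every pair `(a, b) ∈ V` with `a` of degree `n`,
the pivot of `∂b` equals `a`. -/
def NReduced (V : Finset (Fin l × Fin l)) (n : ℕ) : Prop :=
  ∀ p ∈ V, C.deg p.1 = n → vpivot (fun i => C.D i p.2) = (p.1 : WithBot (Fin l))

/-- `V` generates the `n`-boundaries: the gradient cofacet boundaries
`{∂b : (a,b) ∈ V, deg a = n}` span the space of boundaries of degree `n`. -/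
def GeneratesBoundaries (V : Finset (Fin l × Fin l)) (n : ℕ) : Prop :=
  ∀ e : Fin l → 𝕜, (∀ i, e i ≠ 0 → C.deg i = n + 1) →
    C.D.mulVec e ∈ Submodule.span 𝕜
      {x : Fin l → 𝕜 | ∃ p ∈ V, C.deg p.1 = n ∧ x = fun i => C.D i p.2}

/-- A chain is lexicographically minimal if no homologous chain is strictly smaller
in the lexicographic preorder. -/
def LexMinimal (z : Fin l → 𝕜) : Prop :=
  ∀ e : Fin l → 𝕜, ¬ chainLexLt (z + C.D.mulVec e) z

end BasedChainComplex

end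

namespace BasedChainComplex

/-- One step of the exhaustive reduction: pick any index `i` with `c i ≠ 0` and
`(σ_i, σ_j) ∈ V`, and replace `c` by `c − (c_i / D_{i,j}) · D_j`. -/
def redStep {𝕜 : Type} [Field 𝕜] {l : ℕ} (C : BasedChainComplex 𝕜 l)
    (V : Finset (Fin l × Fin l)) (c c' : Fin l → 𝕜) : Prop :=
  ∃ p ∈ V, c p.1 ≠ 0 ∧ c' = c + fun k => -(c p.1) / C.D p.1 p.2 * C.D k p.2

end BasedChainComplex

section AuxLemmas

open Finset

private lemma aux_sum_range_two_pow (n : ℕ) : ∑ k ∈ Finset.range n, 2 ^ k < 2 ^ n := by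
  induction n with
  | zero => simp
  | succ n ih => rw [Finset.sum_range_succ, pow_succ]; omega

private lemma aux_mulVec_apply {𝕜 : Type} [Field 𝕜] {l : ℕ}
    (D : Matrix (Fin l) (Fin l) 𝕜) (w : Fin l → 𝕜) (i : Fin l) :
    D.mulVec w i = ∑ j, D i j * w j := by
  simp [Matrix.mulVec, dotProduct]

private lemma aux_mulVec_eq_sum {𝕜 : Type} [Field 𝕜] {l : ℕ}
    (D : Matrix (Fin l) (Fin l) 𝕜) (w : Fin l → 𝕜) :
    D.mulVec w = ∑ j, w j • (fun i => D i j) := by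
  funext i
  rw [aux_mulVec_apply]
  rw [Finset.sum_apply]
  exact Finset.sum_congr rfl (fun j _ => by simp [mul_comm])

/-- rank of an index under the Morse function with index tie-break -/
private noncomputable def auxRank {l : ℕ} (f : Fin l → ℝ) (i : Fin l) : ℕ :=
  (Finset.univ.filter (fun j => f j < f i ∨ (f j = f i ∧ j < i))).card

private lemma auxRank_lt {l : ℕ} (f : Fin l → ℝ) {i j : Fin l}
    (h : f i < f j ∨ (f i = f j ∧ i < j)) : auxRank f i < auxRank f j := by
  apply Finset.card_lt_card
  have hsub : (Finset.univ.filter (fun k => f k < f i ∨ (f k = f i ∧ k < i))) ⊆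
      (Finset.univ.filter (fun k => f k < f j ∨ (f k = f j ∧ k < j))) := by
    intro k hk
    simp only [Finset.mem_filter, Finset.mem_univ, true_and] at hk ⊢
    rcases h with h | ⟨hfe, hij⟩
    · rcases hk with hk | ⟨hke, _⟩
      · exact Or.inl (hk.trans h)
      · exact Or.inl (hke ▸ h)
    · rcases hk with hk | ⟨hke, hki⟩
      · exact Or.inl (hfe ▸ hk)
      · exact Or.inr ⟨hke.trans hfe, hki.trans hij⟩
  rw [Finset.ssubset_iff_of_subset hsub]
  refine ⟨i, ?_, ?_⟩
  · simp only [Finset.mem_filter, Finset.mem_univ, true_and]; exact h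
  · intro hmem
    rw [Finset.mem_filter] at hmem
    rcases hmem.2 with h1 | h2
    · exact lt_irrefl _ h1
    · exact lt_irrefl _ h2.2

private lemma auxRank_injective {l : ℕ} (f : Fin l → ℝ) : Function.Injective (auxRank f) := by
  intro i j h
  by_contra hne
  rcases lt_trichotomy (f i) (f j) with hf | hf | hf
  · exact absurd h (Nat.ne_of_lt (auxRank_lt f (Or.inl hf)))
  · rcases lt_or_gt_of_ne hne with hij | hij
    · exact absurd h (Nat.ne_of_lt (auxRank_lt f (Or.inr ⟨hf, hij⟩)))
    · exact absurd h.symm (Nat.ne_of_lt (auxRank_lt f (Or.inr ⟨hf.symm, hij⟩)))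
  · exact absurd h.symm (Nat.ne_of_lt (auxRank_lt f (Or.inl hf)))

/-- the termination measure -/
private noncomputable def auxN {𝕜 : Type} [Field 𝕜] {l : ℕ} (f : Fin l → ℝ) (c : Fin l → 𝕜) : ℕ :=
  ∑ i ∈ vsupp c, 2 ^ auxRank f i

/-- the key linear-independence lemma: a combination of gradient cofacet boundary
columns vanishing on all gradient facets is zero. -/
private lemma aux_key {𝕜 : Type} [Field 𝕜] {l : ℕ} (C : BasedChainComplex 𝕜 l)
    (V : Finset (Fin l × Fin l)) (hV : C.IsAlgGradient V)
    (w : Fin l → 𝕜) (hw : ∀ j, w j ≠ 0 → ∃ p ∈ V, p.2 = j)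
    (h0 : ∀ p ∈ V, C.D.mulVec w p.1 = 0) : w = 0 := by
  obtain ⟨hfac, hdisj, f, hmono, hfeq⟩ := hV
  by_contra hne
  have hsupp : (vsupp w).Nonempty := by
    obtain ⟨j, hj⟩ := Function.ne_iff.mp hne
    have hj' : w j ≠ 0 := by simpa using hj
    exact ⟨j, by simp [vsupp, hj']⟩
  obtain ⟨j₀, hj₀, hmax⟩ := Finset.exists_max_image (vsupp w) f hsupp
  have hwj₀ : w j₀ ≠ 0 := by simpa [vsupp] using hj₀
  obtain ⟨p₀, hp₀V, hp₀2⟩ := hw j₀ hwj₀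
  have hDp₀ : C.D p₀.1 p₀.2 ≠ 0 := hfac p₀ hp₀V
  have hfp₀ : f p₀.1 = f p₀.2 := (hfeq p₀.1 p₀.2 hDp₀).2 (by rwa [Prod.mk.eta])
  have hcalc : C.D.mulVec w p₀.1 = C.D p₀.1 j₀ * w j₀ := by
    rw [aux_mulVec_apply]
    refine Finset.sum_eq_single j₀ ?_ (fun h => absurd (Finset.mem_univ j₀) h)
    intro j _ hjne
    by_cases hD : C.D p₀.1 j = 0
    · rw [hD, zero_mul]
    by_cases hwj : w j = 0
    · rw [hwj, mul_zero]
    exfalso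
    obtain ⟨q, hqV, hq2⟩ := hw j hwj
    have hle : f p₀.1 ≤ f j := hmono p₀.1 j hD
    have hlt : f p₀.1 < f j := by
      rcases lt_or_eq_of_le hle with h | h
      · exact h
      · exfalso
        have hmem : (p₀.1, j) ∈ V := (hfeq p₀.1 j hD).1 h
        have hne' : (p₀.1, j) ≠ p₀ := by
          intro he
          apply hjne
          rw [← hp₀2, ← he]
        exact (hdisj (p₀.1, j) hmem p₀ hp₀V hne').1 rfl
    have hjle : f j ≤ f j₀ := hmax j (by simp [vsupp, hwj])
    rw [← hp₀2] at hjle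
    rw [hfp₀] at hlt
    exact absurd (lt_of_lt_of_le hlt hjle) (lt_irrefl _)
  have hzero := h0 p₀ hp₀V
  rw [hcalc] at hzero
  rcases mul_eq_zero.mp hzero with h | h
  · rw [← hp₀2] at h
    exact hDp₀ h
  · exact hwj₀ h

/-- one reduction step strictly decreases the measure -/
private lemma aux_step_decrease {𝕜 : Type} [Field 𝕜] {l : ℕ} (C : BasedChainComplex 𝕜 l)
    (V : Finset (Fin l × Fin l))
    (hfac : ∀ p ∈ V, C.IsFacet p.1 p.2)
    (hdisj : ∀ p ∈ V, ∀ q ∈ V, p ≠ q → p.1 ≠ q.1 ∧ p.1 ≠ q.2 ∧ p.2 ≠ q.1 ∧ p.2 ≠ q.2)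
    (f : Fin l → ℝ) (hmono : ∀ i j, C.IsFacet i j → f i ≤ f j)
    (hfeq : ∀ i j, C.IsFacet i j → (f i = f j ↔ (i, j) ∈ V))
    (c c' : Fin l → 𝕜) (h : C.redStep V c c') : auxN f c' < auxN f c := by
  show ∑ i ∈ vsupp c', 2 ^ auxRank f i < ∑ i ∈ vsupp c, 2 ^ auxRank f i
  obtain ⟨p, hpV, hcp, hc'⟩ := h
  have hD : C.D p.1 p.2 ≠ 0 := hfac p hpV
  have hfab : f p.1 = f p.2 := (hfeq p.1 p.2 hD).2 (by rwa [Prod.mk.eta])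
  have hc'a : c' p.1 = 0 := by
    rw [hc']
    show c p.1 + -c p.1 / C.D p.1 p.2 * C.D p.1 p.2 = 0
    rw [div_mul_cancel₀ _ hD]
    ring
  have hchange : ∀ i, i ≠ p.1 → c' i ≠ c i → auxRank f i < auxRank f p.1 := by
    intro i hi hne
    have hDi : C.D i p.2 ≠ 0 := by
      intro h0
      apply hne
      rw [hc']
      show c i + -c p.1 / C.D p.1 p.2 * C.D i p.2 = c i
      rw [h0, mul_zero, add_zero]
    have hle : f i ≤ f p.2 := hmono i p.2 hDi
    have hlt : f i < f p.2 := by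
      rcases lt_or_eq_of_le hle with h | h
      · exact h
      · exfalso
        have hmem : (i, p.2) ∈ V := (hfeq i p.2 hDi).1 h
        have hne' : (i, p.2) ≠ p := by
          intro he
          apply hi
          rw [← he]
        exact (hdisj (i, p.2) hmem p hpV hne').2.2.2 rfl
    exact auxRank_lt f (Or.inl (by rw [hfab]; exact hlt))
  classical
  set L : Finset (Fin l) := Finset.univ.filter (fun i => auxRank f i < auxRank f p.1) with hL
  have hsub : vsupp c' ⊆ (vsupp c).erase p.1 ∪ L := by
    intro i hi
    have hci' : c' i ≠ 0 := by simpa [vsupp] using hi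
    have hip : i ≠ p.1 := by
      intro he
      rw [he] at hci'
      exact hci' hc'a
    by_cases hch : c' i = c i
    · apply Finset.mem_union_left
      rw [Finset.mem_erase]
      exact ⟨hip, by simp [vsupp, ← hch, hci']⟩
    · apply Finset.mem_union_right
      simp only [hL, Finset.mem_filter, Finset.mem_univ, true_and]
      exact hchange i hip hch
  have hmem_a : p.1 ∈ vsupp c := by simp [vsupp, hcp]
  have h1 : ∑ i ∈ vsupp c', 2 ^ auxRank f i ≤ ∑ i ∈ (vsupp c).erase p.1 ∪ L, 2 ^ auxRank f i :=
    Finset.sum_le_sum_of_subset hsub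
  have h2 : ∑ i ∈ (vsupp c).erase p.1 ∪ L, 2 ^ auxRank f i ≤
      ∑ i ∈ (vsupp c).erase p.1, 2 ^ auxRank f i + ∑ i ∈ L, 2 ^ auxRank f i := by
    have key := @Finset.sum_union_inter (Fin l) ℕ ((vsupp c).erase p.1) L _
      (fun i => 2 ^ auxRank f i) _
    omega
  have h3 : ∑ i ∈ L, 2 ^ auxRank f i < 2 ^ auxRank f p.1 := by
    rw [← Finset.sum_image (g := auxRank f) (f := fun k => 2 ^ k)
      (fun x _ y _ h => auxRank_injective f h)]
    calc ∑ k ∈ L.image (auxRank f), 2 ^ k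
        ≤ ∑ k ∈ Finset.range (auxRank f p.1), 2 ^ k := by
          apply Finset.sum_le_sum_of_subset
          intro k hk
          simp only [Finset.mem_image, hL, Finset.mem_filter, Finset.mem_univ, true_and] at hk
          obtain ⟨i, hi, hik⟩ := hk
          rw [Finset.mem_range, ← hik]
          exact hi
      _ < 2 ^ auxRank f p.1 := aux_sum_range_two_pow _
  have h4 : 2 ^ auxRank f p.1 + ∑ i ∈ (vsupp c).erase p.1, 2 ^ auxRank f i
      = ∑ i ∈ vsupp c, 2 ^ auxRank f i :=
    Finset.add_sum_erase (vsupp c) (fun i => 2 ^ auxRank f i) hmem_a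
  omega

end AuxLemmas
theorem stmt19 {𝕜 : Type} [Field 𝕜] {l : ℕ} (C : BasedChainComplex 𝕜 l)
    (V : Finset (Fin l × Fin l)) (hV : C.IsAlgGradient V)
    (n : ℕ) (c : Fin l → 𝕜) (hc : C.IsCycle n c)
    (r : ℕ) (hr : ∀ s : ℕ, r ≤ s → (C.flow V)^[s] = (C.flow V)^[r]) :
    (¬ ∃ seq : ℕ → (Fin l → 𝕜), seq 0 = c ∧
        ∀ m : ℕ, C.redStep V (seq m) (seq (m + 1))) ∧
    (∀ c' : Fin l → 𝕜, Relation.ReflTransGen (C.redStep V) c c' →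
      (∀ p ∈ V, c' p.1 = 0) →
      c' = (C.flow V)^[r] c ∧ C.flow V c' = c' ∧
        c' - c ∈ Submodule.span 𝕜
          {x : Fin l → 𝕜 | ∃ p ∈ V, x = fun i => C.D i p.2}) := by
  obtain ⟨hfac, hdisj, f, hmono, hfeq⟩ := hV
  have hV' : C.IsAlgGradient V := ⟨hfac, hdisj, f, hmono, hfeq⟩
  constructor
  · -- termination
    rintro ⟨seq, h0, hstep⟩
    have hdec : ∀ m : ℕ, auxN f (seq m) + m ≤ auxN f (seq 0) := by
      intro m
      induction m with
      | zero => simp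
      | succ m ih =>
        have := aux_step_decrease C V hfac hdisj f hmono hfeq _ _ (hstep m)
        omega
    have := hdec (auxN f (seq 0) + 1)
    omega
  · -- characterization of terminal results
    -- preliminary facts
    have hmv0 : ∀ w : Fin l → 𝕜, C.D.mulVec (C.D.mulVec w) = 0 := by
      intro w
      rw [Matrix.mulVec_mulVec, C.dd, Matrix.zero_mulVec]
    have hF0 : C.Fmap V 0 = 0 := by
      funext j
      show (∑ i, (if (i, j) ∈ V then -(C.D i j)⁻¹ else 0) * (0 : Fin l → 𝕜) i) = 0
      simp
    have hF_supp : ∀ z : Fin l → 𝕜, ∀ j, C.Fmap V z j ≠ 0 → ∃ p ∈ V, p.2 = j := by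
      intro z j h
      by_contra hn
      push_neg at hn
      apply h
      show (∑ i, (if (i, j) ∈ V then -(C.D i j)⁻¹ else 0) * z i) = 0
      apply Finset.sum_eq_zero
      intro i _
      have : (i, j) ∉ V := fun hmem => (hn (i, j) hmem) rfl
      simp [this]
    have hF_zero : ∀ z : Fin l → 𝕜, (∀ p ∈ V, z p.1 = 0) → C.Fmap V z = 0 := by
      intro z hz
      funext j
      show (∑ i, (if (i, j) ∈ V then -(C.D i j)⁻¹ else 0) * z i) = 0
      apply Finset.sum_eq_zero
      intro i _
      by_cases h : (i, j) ∈ V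
      · have : z i = 0 := hz (i, j) h
        rw [this, mul_zero]
      · simp [h]
    -- representation of reduction results
    have hrep : ∀ c' : Fin l → 𝕜, Relation.ReflTransGen (C.redStep V) c c' →
        ∃ w : Fin l → 𝕜, (∀ j, w j ≠ 0 → ∃ p ∈ V, p.2 = j) ∧ c' = c + C.D.mulVec w := by
      intro c' h
      induction h with
      | refl => exact ⟨0, by simp, by simp [Matrix.mulVec_zero]⟩
      | @tail b c₂ h₁ hstep ih =>
        obtain ⟨w, hw, hbw⟩ := ih
        obtain ⟨p, hpV, hne, hc₂⟩ := hstep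
        refine ⟨w + Pi.single p.2 (-b p.1 / C.D p.1 p.2), ?_, ?_⟩
        · intro j hj
          by_cases hwj : w j = 0
          · refine ⟨p, hpV, ?_⟩
            by_contra hjp
            apply hj
            simp [hwj, Pi.single_eq_of_ne (fun h => hjp h.symm)]
          · exact hw j hwj
        · rw [hc₂, hbw, Matrix.mulVec_add, Matrix.mulVec_single, add_assoc]
          congr 1
          congr 1
          funext k
          simp only [Pi.smul_apply, op_smul_eq_mul, Matrix.col_apply]
          ring
    -- iterates of the flow
    have hiter : ∀ s : ℕ, ∃ w : Fin l → 𝕜, (∀ j, w j ≠ 0 → ∃ p ∈ V, p.2 = j) ∧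
        (C.flow V)^[s] c = c + C.D.mulVec w := by
      intro s
      induction s with
      | zero => exact ⟨0, by simp, by simp [Matrix.mulVec_zero]⟩
      | succ s ih =>
        obtain ⟨w, hw, hrepr⟩ := ih
        have hcyc : C.D.mulVec ((C.flow V)^[s] c) = 0 := by
          rw [hrepr, Matrix.mulVec_add, hc.1, hmv0, add_zero]
        refine ⟨w + C.Fmap V ((C.flow V)^[s] c), ?_, ?_⟩
        · intro j hj
          by_cases hwj : w j = 0
          · apply hF_supp ((C.flow V)^[s] c) j
            intro hF
            apply hj
            simp [hwj, hF]
          · exact hw j hwj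
        · rw [Function.iterate_succ_apply']
          show (C.flow V)^[s] c + C.D.mulVec (C.Fmap V ((C.flow V)^[s] c)) +
              C.Fmap V (C.D.mulVec ((C.flow V)^[s] c)) = _
          rw [hcyc, hF0, add_zero, hrepr, Matrix.mulVec_add, add_assoc]
    -- the stabilized flow z := Φ^[r] c
    obtain ⟨w₂, hw₂, hzrep⟩ := hiter r
    set z := (C.flow V)^[r] c with hz
    have hzcyc : C.D.mulVec z = 0 := by
      rw [hzrep, Matrix.mulVec_add, hc.1, hmv0, add_zero]
    have hzinv : C.flow V z = z := by
      have h1 : (C.flow V)^[r + 1] c = (C.flow V)^[r] c := by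
        rw [hr (r + 1) (Nat.le_succ r)]
      rw [Function.iterate_succ_apply'] at h1
      exact h1
    have hDFz : C.D.mulVec (C.Fmap V z) = 0 := by
      have : z + C.D.mulVec (C.Fmap V z) + C.Fmap V (C.D.mulVec z) = z := hzinv
      rw [hzcyc, hF0, add_zero] at this
      have := congrArg (fun x => x - z) this
      simpa using this
    have hFz : C.Fmap V z = 0 :=
      aux_key C V hV' _ (hF_supp z) (fun p _ => by rw [hDFz]; rfl)
    have hzV : ∀ p ∈ V, z p.1 = 0 := by
      intro p hpV
      have hD : C.D p.1 p.2 ≠ 0 := hfac p hpV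
      have h1 : C.Fmap V z p.2 = (if (p.1, p.2) ∈ V then -(C.D p.1 p.2)⁻¹ else 0) * z p.1 := by
        show (∑ i, (if (i, p.2) ∈ V then -(C.D i p.2)⁻¹ else 0) * z i) =
          (if (p.1, p.2) ∈ V then -(C.D p.1 p.2)⁻¹ else 0) * z p.1
        refine Finset.sum_eq_single p.1 ?_ (fun h => absurd (Finset.mem_univ p.1) h)
        · intro i _ hine
          have : (i, p.2) ∉ V := by
            intro hmem
            have hne' : (i, p.2) ≠ p := by
              intro he
              apply hine
              rw [← he]
            exact (hdisj (i, p.2) hmem p hpV hne').2.2.2 rfl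
          simp [this]
      rw [hFz, if_pos (show ((p.1, p.2) : Fin l × Fin l) ∈ V from by rwa [Prod.mk.eta])] at h1
      have h2 : -(C.D p.1 p.2)⁻¹ * z p.1 = 0 := by
        rw [← h1]
        rfl
      rcases mul_eq_zero.mp h2 with h | h
      · exact absurd (neg_eq_zero.mp h) (inv_ne_zero hD)
      · exact h
    -- now the main conclusion
    intro c' hrt hc'V
    obtain ⟨w₁, hw₁, hc'rep⟩ := hrep c' hrt
    have hzc' : c' = z := by
      have hd : w₁ - w₂ = 0 := by
        apply aux_key C V hV' (w₁ - w₂)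
        · intro j hj
          by_cases h1 : w₁ j = 0
          · apply hw₂ j
            intro h2
            apply hj
            simp [Pi.sub_apply, h1, h2]
          · exact hw₁ j h1
        · intro p hpV
          have : C.D.mulVec (w₁ - w₂) = c' - z := by
            rw [Matrix.mulVec_sub, hc'rep, hzrep]
            abel
          rw [this]
          show c' p.1 - z p.1 = 0
          rw [hc'V p hpV, hzV p hpV, sub_zero]
      have : C.D.mulVec w₁ = C.D.mulVec w₂ := by
        have := congrArg (C.D.mulVec) (sub_eq_zero.mp hd)
        exact this
      rw [hc'rep, hzrep, this]
    refine ⟨hzc', ?_, ?_⟩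
    · -- flow invariance of c'
      have hc'cyc : C.D.mulVec c' = 0 := by
        rw [hc'rep, Matrix.mulVec_add, hc.1, hmv0, add_zero]
      have hFc' : C.Fmap V c' = 0 := hF_zero c' hc'V
      show c' + C.D.mulVec (C.Fmap V c') + C.Fmap V (C.D.mulVec c') = c'
      rw [hFc', hc'cyc, hF0, Matrix.mulVec_zero, add_zero, add_zero]
    · -- span membership
      have : c' - c = C.D.mulVec w₁ := by rw [hc'rep]; abel
      rw [this, aux_mulVec_eq_sum]
      apply Submodule.sum_mem
      intro j _
      by_cases hwj : w₁ j = 0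
      · rw [hwj, zero_smul]
        exact Submodule.zero_mem _
      · apply Submodule.smul_mem
        apply Submodule.subset_span
        obtain ⟨p, hpV, hpj⟩ := hw₁ j hwj
        exact ⟨p, hpV, by rw [hpj]⟩
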